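/- Let ℝ^d carry the Euclidean metric δ(x, y) = ‖x − y‖, let α ≥ 2 + √3, and let c₁, c₂ ∈ ℝ^d. Suppose p, p′, p″ ∈ ℝ^d are all α-proximal to c₁ (i.e., α·‖x − c₁‖ < ‖x − c₂‖ for x ∈ {p, p′, p″}) and q ∈ ℝ^d is α-proximal to c₂ (i.e., α·‖q − c₂‖ < ‖q − c₁‖). Then ‖p − p′‖ ≤ ‖p″ − q‖: every intra-cluster distance is at most every inter-cluster distance. -/

import Mathlib

/-- Apollonius-ball lemma: an `α`-proximal point to `c₁` lies in a ball of radius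
`α·‖c₁ - c₂‖/(α² - 1)` around `c₁ + (α²-1)⁻¹ • (c₁ - c₂)`. -/
lemma apollonius_ball {E : Type*} [NormedAddCommGroup E] [InnerProductSpace ℝ E]
    (α : ℝ) (hα : 1 < α) (c₁ c₂ x : E) (h : α * ‖x - c₁‖ < ‖x - c₂‖) :
    ‖x - (c₁ + ((α ^ 2 - 1)⁻¹) • (c₁ - c₂))‖ < α * (α ^ 2 - 1)⁻¹ * ‖c₁ - c₂‖ := by
  set t : ℝ := (α ^ 2 - 1)⁻¹ with ht_def
  have hden : 0 < α ^ 2 - 1 := by nlinarith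
  have ht : 0 < t := inv_pos.mpr hden
  have htinv : t * (α ^ 2 - 1) = 1 := inv_mul_cancel₀ (ne_of_gt hden)
  have hsq : (α * ‖x - c₁‖) ^ 2 < ‖x - c₂‖ ^ 2 := by
    have h0 : 0 ≤ α * ‖x - c₁‖ := by positivity
    nlinarith [norm_nonneg (x - c₂)]
  have e1 : ‖x - c₂‖ ^ 2
      = ‖x - c₁‖ ^ 2 + 2 * inner ℝ (x - c₁) (c₁ - c₂) + ‖c₁ - c₂‖ ^ 2 := by
    rw [show x - c₂ = (x - c₁) + (c₁ - c₂) by abel]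
    exact norm_add_sq_real _ _
  have e2 : ‖x - (c₁ + t • (c₁ - c₂))‖ ^ 2
      = ‖x - c₁‖ ^ 2 - 2 * (t * inner ℝ (x - c₁) (c₁ - c₂)) + t ^ 2 * ‖c₁ - c₂‖ ^ 2 := by
    rw [show x - (c₁ + t • (c₁ - c₂)) = (x - c₁) - t • (c₁ - c₂) by abel]
    rw [norm_sub_sq_real, real_inner_smul_right, norm_smul, Real.norm_eq_abs,
      abs_of_pos ht]
    ring
  refine lt_of_pow_lt_pow_left₀ 2 (by positivity) ?_
  have hsq2 : t * (α * ‖x - c₁‖) ^ 2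
      < t * (‖x - c₁‖ ^ 2 + 2 * inner ℝ (x - c₁) (c₁ - c₂) + ‖c₁ - c₂‖ ^ 2) := by
    rw [← e1]; exact mul_lt_mul_of_pos_left hsq ht
  have h4 : t * (α ^ 2 - 1) * ‖x - c₁‖ ^ 2 = ‖x - c₁‖ ^ 2 := by
    rw [htinv]; ring
  have hA : ‖x - c₁‖ ^ 2 < 2 * (t * inner ℝ (x - c₁) (c₁ - c₂)) + t * ‖c₁ - c₂‖ ^ 2 := by
    nlinarith [hsq2, h4]
  have h5 : t * ‖c₁ - c₂‖ ^ 2 + t ^ 2 * ‖c₁ - c₂‖ ^ 2 = (α * t * ‖c₁ - c₂‖) ^ 2 := by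
    linear_combination (-(t * ‖c₁ - c₂‖ ^ 2)) * htinv
  rw [e2]
  nlinarith [hA, h5]

/-- In Euclidean space with `α ≥ 2 + √3`, if `p, p′, p″` are `α`-proximal
to `c₁` and `q` is `α`-proximal to `c₂`, then every intra-cluster distance is at most
every inter-cluster distance: `‖p − p′‖ ≤ ‖p″ − q‖`. -/
theorem intra_le_inter_euclidean {d : ℕ}
    (α : ℝ) (hα : 2 + Real.sqrt 3 ≤ α) (c₁ c₂ p p' p'' q : EuclideanSpace ℝ (Fin d))
    (hp : α * ‖p - c₁‖ < ‖p - c₂‖)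
    (hp' : α * ‖p' - c₁‖ < ‖p' - c₂‖)
    (hp'' : α * ‖p'' - c₁‖ < ‖p'' - c₂‖)
    (hq : α * ‖q - c₂‖ < ‖q - c₁‖) :
    ‖p - p'‖ ≤ ‖p'' - q‖ := by
  have hs3 : (0:ℝ) ≤ Real.sqrt 3 := Real.sqrt_nonneg 3
  have hs3' : Real.sqrt 3 ^ 2 = 3 := Real.sq_sqrt (by norm_num)
  have hα1 : 1 < α := by nlinarith
  have hden : 0 < α ^ 2 - 1 := by nlinarith
  set t : ℝ := (α ^ 2 - 1)⁻¹ with ht_def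
  have ht : 0 < t := inv_pos.mpr hden
  have htinv : t * (α ^ 2 - 1) = 1 := inv_mul_cancel₀ (ne_of_gt hden)
  set m₁ : EuclideanSpace ℝ (Fin d) := c₁ + t • (c₁ - c₂) with hm₁
  set m₂ : EuclideanSpace ℝ (Fin d) := c₂ + t • (c₂ - c₁) with hm₂
  set r : ℝ := ‖c₁ - c₂‖ with hr
  have hr0 : 0 ≤ r := norm_nonneg _
  have hb1 : ‖p - m₁‖ < α * t * r := apollonius_ball α hα1 c₁ c₂ p hp
  have hb2 : ‖p' - m₁‖ < α * t * r := apollonius_ball α hα1 c₁ c₂ p' hp'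
  have hb3 : ‖p'' - m₁‖ < α * t * r := apollonius_ball α hα1 c₁ c₂ p'' hp''
  have hb4 : ‖q - m₂‖ < α * t * r := by
    have := apollonius_ball α hα1 c₂ c₁ q hq
    rwa [norm_sub_rev c₂ c₁] at this
  have hmm : ‖m₁ - m₂‖ = (1 + 2 * t) * r := by
    have : m₁ - m₂ = (1 + 2 * t) • (c₁ - c₂) := by
      rw [hm₁, hm₂]; module
    rw [this, norm_smul, Real.norm_eq_abs, abs_of_pos (by linarith)]
  -- triangle inequalities
  have tri1 : ‖p - p'‖ ≤ ‖p - m₁‖ + ‖p' - m₁‖ := by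
    rw [show p - p' = (p - m₁) - (p' - m₁) by abel]
    exact norm_sub_le _ _
  have tri2 : ‖m₁ - m₂‖ ≤ ‖p'' - m₁‖ + ‖p'' - q‖ + ‖q - m₂‖ := by
    calc ‖m₁ - m₂‖ = ‖(m₁ - p'') + (p'' - q) + (q - m₂)‖ := by
          congr 1; abel
      _ ≤ ‖m₁ - p''‖ + ‖p'' - q‖ + ‖q - m₂‖ := by
          refine le_trans (norm_add_le _ _) ?_
          gcongr
          exact norm_add_le _ _
      _ = ‖p'' - m₁‖ + ‖p'' - q‖ + ‖q - m₂‖ := by rw [norm_sub_rev]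
  -- the key numeric inequality: 4·α·t ≤ 1 + 2·t, i.e. α² - 4α + 1 ≥ 0
  have hkey : 4 * (α * t) * r ≤ (1 + 2 * t) * r := by
    have h1 : 4 * (α * t) ≤ 1 + 2 * t := by
      have hquad : 0 ≤ α ^ 2 - 4 * α + 1 := by
        nlinarith [sq_nonneg (α - 2 - Real.sqrt 3)]
      nlinarith [mul_nonneg ht.le hquad, htinv]
    exact mul_le_mul_of_nonneg_right h1 hr0
  rw [hmm] at tri2
  linarith
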